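/- Let n and r be integers with (n-1)/2 < r < n-1, let α > 0 satisfy α^{n-r} + (2r-n)·α - (2r-n+2) = 0, and set C = (α-1)·α^{-(n-r)}. Define exponents μ_i for i ∈ [n] by μ_i = (n-r) - i for 1 ≤ i ≤ n-r, μ_i = 0 for n-r ≤ i ≤ r+1, and μ_i = i - (r+1) for r+1 ≤ i ≤ n. Define the n×n matrix Q_{r,n} = (q_{i,j}) by q_{i,j} = a_{i,j} · C · α^{μ_i + μ_j}. Then Q_{r,n} is a doubly stochastic matrix with the same support as A_{r,n}. -/

import Mathlib

open Finset

private lemma key_sum (n r : ℕ) (hn : r + 2 ≤ n) (hrn : n ≤ 2 * r)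
    (α : ℝ) (hα1 : 1 < α)
    (heq : α ^ (n - r) + (2 * (r : ℝ) - (n : ℝ)) * α - (2 * (r : ℝ) - (n : ℝ) + 2) = 0)
    (μ : ℕ → ℕ)
    (hμ : ∀ i : ℕ, 1 ≤ i → i ≤ n →
      μ i = if i ≤ n - r then n - r - i else if i ≤ r + 1 then 0 else i - (r + 1))
    (a : ℕ) (ha : a < n) :
    (α - 1) * ∑ j ∈ range n,
      (if |(a : ℤ) - (j : ℤ)| ≤ (r : ℤ) then (1:ℝ) else 0) * α ^ (μ (a+1) + μ (j+1))
      = α ^ (n - r) := by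
  set m := n - r with hm
  clear_value m
  have hm2 : 2 ≤ m := by omega
  have hmr : m ≤ r := by omega
  have geom : ∀ k : ℕ, (α - 1) * ∑ j ∈ range k, α ^ j = α ^ k - 1 := by
    intro k; rw [mul_comm, geom_sum_mul]
  -- full sum
  have hfull : (α - 1) * ∑ j ∈ range n, α ^ μ (j + 1) = α ^ m := by
    have e1 : ∑ j ∈ range n, α ^ μ (j + 1)
        = (∑ j ∈ Ico 0 m, α ^ μ (j + 1)) + (∑ j ∈ Ico m (r+1), α ^ μ (j + 1))
          + (∑ j ∈ Ico (r+1) n, α ^ μ (j + 1)) := by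
      rw [Finset.sum_Ico_consecutive _ (by omega) (by omega : m ≤ r+1),
        Finset.sum_Ico_consecutive _ (by omega : (0:ℕ) ≤ r+1) (by omega), ← Finset.range_eq_Ico]
    have p1 : ∑ j ∈ Ico 0 m, α ^ μ (j + 1) = ∑ j ∈ range m, α ^ j := by
      rw [← Finset.range_eq_Ico, ← Finset.sum_range_reflect (fun j => α ^ j) m]
      refine Finset.sum_congr rfl fun j hj => ?_
      rw [mem_range] at hj
      rw [hμ (j+1) (by omega) (by omega), if_pos (show j + 1 ≤ m by omega)]
      congr 1; omega
    have p2 : ∑ j ∈ Ico m (r+1), α ^ μ (j + 1) = ((r + 1 - m : ℕ) : ℝ) := by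
      have hone : ∀ j ∈ Ico m (r+1), α ^ μ (j + 1) = 1 := by
        intro j hj
        rw [mem_Ico] at hj
        rw [hμ (j+1) (by omega) (by omega), if_neg (by omega), if_pos (by omega), pow_zero]
      rw [Finset.sum_congr rfl hone, Finset.sum_const, Nat.card_Ico]
      simp
    have p3 : ∑ j ∈ Ico (r+1) n, α ^ μ (j + 1) = α * ∑ j ∈ range (m-1), α ^ j := by
      rw [Finset.sum_Ico_eq_sum_range, Finset.mul_sum]
      have hc : n - (r+1) = m - 1 := by omega
      rw [hc]
      refine Finset.sum_congr rfl fun j hj => ?_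
      rw [mem_range] at hj
      rw [hμ (r+1+j+1) (by omega) (by omega), if_neg (by omega), if_neg (by omega),
        show r+1+j+1 - (r+1) = j + 1 by omega, pow_succ]
      ring
    have g1 := geom m
    have g2 := geom (m-1)
    have hcast : ((r + 1 - m : ℕ) : ℝ) = 2*(r:ℝ) - n + 1 := by
      have h1 : ((r + 1 - m : ℕ) : ℝ) = ((r+1 : ℕ):ℝ) - ((m : ℕ):ℝ) :=
        Nat.cast_sub (show m ≤ r + 1 by omega)
      have h2 : ((m : ℕ):ℝ) = ((n : ℕ):ℝ) - ((r : ℕ):ℝ) := by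
        rw [hm]; exact Nat.cast_sub (show r ≤ n by omega)
      rw [h1, h2]; push_cast; ring
    have hpow : α * α ^ (m - 1) = α ^ m := by
      rw [← pow_succ']; congr 1; omega
    rw [e1, p1, p2, p3]
    have expand : (α - 1) * (∑ j ∈ range m, α ^ j + ((r + 1 - m : ℕ) : ℝ)
        + α * ∑ j ∈ range (m-1), α ^ j)
        = (α ^ m - 1) + ((r + 1 - m : ℕ) : ℝ) * (α - 1) + α * (α ^ (m-1) - 1) := by
      rw [← g1, ← g2]; ring
    rw [expand, hcast, mul_sub α, hpow]
    linear_combination heq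
  -- tail sums
  have htail : ∀ b : ℕ, 1 ≤ b → b ≤ m - 1 →
      (α - 1) * ∑ j ∈ Ico (b + r) n, α ^ μ (j + 1) = α ^ m - α ^ b := by
    intro b hb1 hb2
    rw [Finset.sum_Ico_eq_sum_range]
    have hc : n - (b + r) = m - b := by omega
    rw [hc]
    have e : ∑ j ∈ range (m - b), α ^ μ (b + r + j + 1) = α ^ b * ∑ j ∈ range (m - b), α ^ j := by
      rw [Finset.mul_sum]
      refine Finset.sum_congr rfl fun j hj => ?_
      rw [mem_range] at hj
      rw [hμ (b+r+j+1) (by omega) (by omega), if_neg (by omega), if_neg (by omega), ← pow_add]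
      congr 1; omega
    rw [e, ← mul_assoc, mul_comm (α-1) (α^b), mul_assoc, geom (m-b), mul_sub, ← pow_add,
      mul_one, show b + (m - b) = m by omega]
  -- head sums
  have hhead : ∀ c : ℕ, 1 ≤ c → c ≤ m - 1 →
      (α - 1) * ∑ j ∈ range c, α ^ μ (j + 1) = α ^ m - α ^ (m - c) := by
    intro c hc1 hc2
    have e : ∑ j ∈ range c, α ^ μ (j + 1) = α ^ (m - c) * ∑ j ∈ range c, α ^ j := by
      rw [← Finset.sum_range_reflect (fun j => α ^ j) c, Finset.mul_sum]
      refine Finset.sum_congr rfl fun j hj => ?_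
      rw [mem_range] at hj
      rw [hμ (j+1) (by omega) (by omega), if_pos (show j + 1 ≤ m by omega), ← pow_add]
      congr 1; omega
    rw [e, ← mul_assoc, mul_comm (α-1) (α^(m-c)), mul_assoc, geom c, mul_sub, ← pow_add,
      mul_one, show m - c + c = m by omega]
  -- split off the row factor
  have step : ∀ j : ℕ, (if |(a : ℤ) - (j : ℤ)| ≤ (r : ℤ) then (1:ℝ) else 0)
      * α ^ (μ (a+1) + μ (j+1))
      = α ^ μ (a+1) * (if |(a : ℤ) - (j : ℤ)| ≤ (r : ℤ) then α ^ μ (j+1) else 0) := by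
    intro j; split <;> simp [pow_add]
  simp only [step]
  rw [← Finset.mul_sum, ← Finset.sum_filter]
  rcases lt_or_ge (a + 1) m with hcase | hcase
  · -- case B : a ≤ m - 2
    have hμa : μ (a+1) = m - (a+1) := by
      rw [hμ (a+1) (by omega) (by omega), if_pos (show a + 1 ≤ m by omega)]
    have hfilter : (range n).filter (fun j : ℕ => |(a : ℤ) - (j : ℤ)| ≤ (r : ℤ))
        = range (a + r + 1) := by
      ext j
      simp only [mem_filter, mem_range, abs_le]
      omega
    rw [hfilter]
    have hsplit : (∑ j ∈ range (a+r+1), α ^ μ (j+1)) + ∑ j ∈ Ico (a+r+1) n, α ^ μ (j+1)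
        = ∑ j ∈ range n, α ^ μ (j+1) := by
      rw [Finset.range_eq_Ico, Finset.range_eq_Ico]
      exact Finset.sum_Ico_consecutive _ (by omega) (by omega)
    have ht := htail (a+1) (by omega) (by omega)
    rw [show a + 1 + r = a + r + 1 by omega] at ht
    have hS : (α - 1) * ∑ j ∈ range (a+r+1), α ^ μ (j+1) = α ^ (a+1) := by
      have h := hfull
      rw [← hsplit, mul_add] at h
      linarith
    rw [hμa]
    calc (α - 1) * (α ^ (m - (a+1)) * ∑ j ∈ range (a+r+1), α ^ μ (j+1))
        = α ^ (m - (a+1)) * ((α - 1) * ∑ j ∈ range (a+r+1), α ^ μ (j+1)) := by ring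
      _ = α ^ (m - (a+1)) * α ^ (a+1) := by rw [hS]
      _ = α ^ m := by rw [← pow_add]; congr 1; omega
  · rcases le_or_gt (a + 1) (r + 1) with hcase2 | hcase2
    · -- case A : middle
      have hμa : μ (a+1) = 0 := by
        rw [hμ (a+1) (by omega) (by omega)]
        split_ifs <;> omega
      have hfilter : (range n).filter (fun j : ℕ => |(a : ℤ) - (j : ℤ)| ≤ (r : ℤ))
          = range n := by
        ext j
        simp only [mem_filter, mem_range, abs_le]
        omega
      rw [hfilter, hμa, pow_zero, one_mul, hfull]
    · -- case C : a ≥ r + 1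
      have hμa : μ (a+1) = a - r := by
        rw [hμ (a+1) (by omega) (by omega), if_neg (by omega), if_neg (by omega)]
        omega
      have hfilter : (range n).filter (fun j : ℕ => |(a : ℤ) - (j : ℤ)| ≤ (r : ℤ))
          = Ico (a - r) n := by
        ext j
        simp only [mem_filter, mem_range, mem_Ico, abs_le]
        omega
      rw [hfilter]
      have hsplit : (∑ j ∈ range (a - r), α ^ μ (j+1)) + ∑ j ∈ Ico (a-r) n, α ^ μ (j+1)
          = ∑ j ∈ range n, α ^ μ (j+1) := by
        rw [Finset.range_eq_Ico, Finset.range_eq_Ico]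
        exact Finset.sum_Ico_consecutive _ (by omega) (by omega)
      have hh := hhead (a - r) (by omega) (by omega)
      have hS : (α - 1) * ∑ j ∈ Ico (a-r) n, α ^ μ (j+1) = α ^ (m - (a - r)) := by
        have h := hfull
        rw [← hsplit, mul_add] at h
        linarith
      rw [hμa]
      calc (α - 1) * (α ^ (a - r) * ∑ j ∈ Ico (a-r) n, α ^ μ (j+1))
          = α ^ (a - r) * ((α - 1) * ∑ j ∈ Ico (a-r) n, α ^ μ (j+1)) := by ring
        _ = α ^ (a - r) * α ^ (m - (a - r)) := by rw [hS]
        _ = α ^ m := by rw [← pow_add]; congr 1; omega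

/-- The matrix `Q_{r,n}` (second class, case `(n-1)/2 < r < n-1`), defined with
1-based indices `i+1, j+1` by `q_{i,j} = a_{i,j} · C · α^(μ_i + μ_j)` with
`C = (α-1)·α^(-(n-r))` and `α > 0` the root of
`α^(n-r) + (2r-n)·α - (2r-n+2) = 0`, is a doubly stochastic matrix with the
same support as `A_{r,n}`. -/
theorem second_class_Q_large_radius_doubly_stochastic (n r : ℕ)
    (h1 : (n : ℤ) - 1 < 2 * (r : ℤ)) (h2 : (r : ℤ) < (n : ℤ) - 1)
    (α : ℝ) (hα : 0 < α)
    (heq : α ^ (n - r) + (2 * (r : ℝ) - (n : ℝ)) * α - (2 * (r : ℝ) - (n : ℝ) + 2) = 0)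
    (C : ℝ) (hC : C = (α - 1) / α ^ (n - r))
    (μ : ℕ → ℕ)
    (hμ : ∀ i : ℕ, 1 ≤ i → i ≤ n →
      μ i = if i ≤ n - r then n - r - i else if i ≤ r + 1 then 0 else i - (r + 1))
    (Q : Matrix (Fin n) (Fin n) ℝ)
    (hQ : ∀ i j : Fin n,
      Q i j =
        (if |((i : ℕ) : ℤ) - ((j : ℕ) : ℤ)| ≤ (r : ℤ) then (1 : ℝ) else 0) * C *
          α ^ (μ ((i : ℕ) + 1) + μ ((j : ℕ) + 1))) :
    (∀ i j, 0 ≤ Q i j) ∧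
    (∀ i, ∑ j, Q i j = 1) ∧
    (∀ j, ∑ i, Q i j = 1) ∧
    (∀ i j : Fin n, Q i j ≠ 0 ↔ |((i : ℕ) : ℤ) - ((j : ℕ) : ℤ)| ≤ (r : ℤ)) := by
  have hn : r + 2 ≤ n := by omega
  have hrn : n ≤ 2 * r := by omega
  have hKnn : (0:ℝ) ≤ 2 * (r:ℝ) - n := by
    have : (n:ℝ) ≤ 2 * r := by exact_mod_cast hrn
    linarith
  have hα1 : 1 < α := by
    by_contra h
    push_neg at h
    have hp : α ^ (n - r) ≤ 1 := pow_le_one₀ hα.le h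
    nlinarith [heq, hKnn, hp]
  have hC0 : 0 < C := by
    rw [hC]
    exact div_pos (by linarith) (pow_pos (by linarith) _)
  have hrow : ∀ i : Fin n, ∑ j, Q i j = 1 := by
    intro i
    have hk := key_sum n r hn hrn α hα1 heq μ hμ (i : ℕ) i.isLt
    have e1 : ∑ j, Q i j
        = ∑ a ∈ range n, (if |((i : ℕ) : ℤ) - (a : ℤ)| ≤ (r : ℤ) then (1:ℝ) else 0) * C *
            α ^ (μ ((i : ℕ) + 1) + μ (a + 1)) := by
      rw [← Fin.sum_univ_eq_sum_range (fun a : ℕ =>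
        (if |((i : ℕ) : ℤ) - (a : ℤ)| ≤ (r : ℤ) then (1:ℝ) else 0) * C *
          α ^ (μ ((i : ℕ) + 1) + μ (a + 1))) n]
      exact Finset.sum_congr rfl fun j _ => hQ i j
    have e2 : ∑ a ∈ range n, (if |((i : ℕ) : ℤ) - (a : ℤ)| ≤ (r : ℤ) then (1:ℝ) else 0) * C *
        α ^ (μ ((i : ℕ) + 1) + μ (a + 1))
        = C * ∑ a ∈ range n, (if |((i : ℕ) : ℤ) - (a : ℤ)| ≤ (r : ℤ) then (1:ℝ) else 0) *
            α ^ (μ ((i : ℕ) + 1) + μ (a + 1)) := by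
      rw [Finset.mul_sum]
      exact Finset.sum_congr rfl fun a _ => by ring
    rw [e1, e2, hC]
    have hne : (0:ℝ) < α ^ (n - r) := pow_pos (by linarith) _
    calc (α - 1) / α ^ (n - r) * ∑ a ∈ range n,
          (if |((i : ℕ) : ℤ) - (a : ℤ)| ≤ (r : ℤ) then (1:ℝ) else 0) *
            α ^ (μ ((i : ℕ) + 1) + μ (a + 1))
        = ((α - 1) * ∑ a ∈ range n,
            (if |((i : ℕ) : ℤ) - (a : ℤ)| ≤ (r : ℤ) then (1:ℝ) else 0) *
              α ^ (μ ((i : ℕ) + 1) + μ (a + 1))) / α ^ (n - r) := by ring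
      _ = 1 := by rw [hk]; exact div_self hne.ne'
  have hsym : ∀ i j : Fin n, Q i j = Q j i := by
    intro i j
    rw [hQ i j, hQ j i]
    rw [abs_sub_comm, add_comm (μ ((i : ℕ) + 1))]
  refine ⟨?_, hrow, ?_, ?_⟩
  · intro i j
    rw [hQ i j]
    split_ifs with h
    · have := pow_pos hα (μ ((i : ℕ) + 1) + μ ((j : ℕ) + 1))
      positivity
    · simp
  · intro j
    rw [Finset.sum_congr rfl fun i _ => hsym i j]
    exact hrow j
  · intro i j
    rw [hQ i j]
    constructor
    · intro hne
      by_contra hcond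
      exact hne (by rw [if_neg hcond]; ring)
    · intro hcond
      rw [if_pos hcond, one_mul]
      exact (mul_pos hC0 (pow_pos hα _)).ne'
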